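/- Let d ≥ 1 and let Λ ⊆ ℕ^d be a finite multi-index set that is downward closed and convex. Then the set ⌊½Λ⌋ := {⌊α/2⌋ : α ∈ Λ} is itself a half-set for Λ, i.e., ⌊½Λ⌋ + ⌊½Λ⌋ ⊆ Λ. -/

import Mathlib

open Pointwise

/-- If `Λ ⊆ ℕ^d` is finite, downward closed and convex, then
`⌊½Λ⌋ = {⌊α/2⌋ : α ∈ Λ}` is itself a half-set for `Λ`, i.e. `⌊½Λ⌋ + ⌊½Λ⌋ ⊆ Λ`. -/
theorem floor_half_is_half_set {d : ℕ} (hd : 1 ≤ d) (Λ : Finset (Fin d → ℕ))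
    (hdc : ∀ α ∈ Λ, ∀ β : Fin d → ℕ, β ≤ α → β ∈ Λ)
    (hconv : ∀ t : ℝ, 0 ≤ t → t ≤ 1 → ∀ α ∈ Λ, ∀ β ∈ Λ,
      (fun j => ⌊t * (α j : ℝ) + (1 - t) * (β j : ℝ)⌋₊) ∈ Λ) :
    (Λ.image fun α j => α j / 2) + (Λ.image fun α j => α j / 2) ⊆ Λ := by
  intro x hx
  rw [Finset.mem_add] at hx
  obtain ⟨y, hy, z, hz, rfl⟩ := hx
  rw [Finset.mem_image] at hy hz
  obtain ⟨α, hα, rfl⟩ := hy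
  obtain ⟨β, hβ, rfl⟩ := hz
  have hγ := hconv (1/2) (by norm_num) (by norm_num) α hα β hβ
  refine hdc _ hγ _ ?_
  intro j
  have h : (1/2 : ℝ) * (α j : ℝ) + (1 - 1/2) * (β j : ℝ) = ((α j + β j : ℕ) : ℝ) / 2 := by
    push_cast; ring
  simp only [Pi.add_apply]
  rw [h, show ((2:ℝ)) = ((2:ℕ):ℝ) by norm_num, Nat.floor_div_natCast, Nat.floor_natCast]
  exact Nat.add_div_le_add_div _ _ _
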